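/- arXiv:2407.12412 — 2 statements merged into one kernel-verified Lean document; each statement's English description precedes it below -/
import Mathlib

section
/- Let K be an algebraically closed field, let m, n be positive integers, and let r be an integer with 1 ≤ r ≤ min(m, n). Set f = Σ_{i=0}^{r} x_i y_i in K[x_0, …, x_m, y_0, …, y_n]. If g ∈ K[x_0, …, x_m, y_0, …, y_n] vanishes at every point (x, y) ∈ K^{m+1} × K^{n+1} at which f vanishes, then f divides g. -/
set_option maxHeartbeats 1000000

open MvPolynomial

/-- A variable is prime in a multivariate polynomial ring over a domain. -/
lemma mvPrimeX {σ : Type*} {K : Type*} [CommRing K] [IsDomain K] (i : σ) :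
    Prime (X i : MvPolynomial σ K) := by
  classical
  let e : Option {b : σ // b ≠ i} ≃ σ := Equiv.optionSubtypeNe i
  let E := ((renameEquiv K e).symm.trans (optionEquivLeft K {b : σ // b ≠ i}))
  rw [← MulEquiv.prime_iff E]
  have : E (X i) = Polynomial.X := by
    show optionEquivLeft K _ ((renameEquiv K e).symm (X i)) = _
    rw [renameEquiv_symm, renameEquiv_apply, rename_X]
    have : e.symm i = none := Equiv.optionSubtypeNe_symm_self i
    rw [this, optionEquivLeft_X_none]
  show Prime (E (X i))
  rw [this]
  exact Polynomial.prime_X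

lemma linIrred {R : Type*} [CommRing R] [IsDomain R] {a c : R} (ha : Prime a) (hac : ¬ a ∣ c) :
    Irreducible (Polynomial.C a * Polynomial.X + Polynomial.C c) := by
  have ha0 : a ≠ 0 := ha.ne_zero
  have hd : (Polynomial.C a * Polynomial.X + Polynomial.C c).natDegree = 1 :=
    Polynomial.natDegree_linear ha0
  have hne : (Polynomial.C a * Polynomial.X + Polynomial.C c) ≠ 0 := by
    intro h; rw [h] at hd; simp at hd
  have claim : ∀ p q : Polynomial R, Polynomial.C a * Polynomial.X + Polynomial.C c = p * q →
      q.natDegree = 0 → IsUnit q := by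
    intro p q hpq hq
    obtain ⟨d, rfl⟩ := Polynomial.natDegree_eq_zero.mp hq
    have hdvd : Polynomial.C d ∣ Polynomial.C a * Polynomial.X + Polynomial.C c :=
      Dvd.intro_left p hpq.symm
    rw [Polynomial.C_dvd_iff_dvd_coeff] at hdvd
    have hda : d ∣ a := by
      have := hdvd 1
      simpa using this
    have hdc : d ∣ c := by
      have := hdvd 0
      simpa using this
    obtain ⟨u, hu⟩ := hda
    rcases ha.irreducible.isUnit_or_isUnit hu with h | h
    · exact Polynomial.isUnit_C.mpr h
    · exfalso
      apply hac
      obtain ⟨v, hv⟩ := h.exists_right_inv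
      have : a ∣ d := ⟨v, by rw [hu]; rw [mul_assoc, hv, mul_one]⟩
      exact this.trans hdc
  constructor
  · intro hu
    have := Polynomial.natDegree_eq_zero_of_isUnit hu
    omega
  · intro p q hpq
    have hp0 : p ≠ 0 := by rintro rfl; rw [zero_mul] at hpq; exact hne hpq
    have hq0 : q ≠ 0 := by rintro rfl; rw [mul_zero] at hpq; exact hne hpq
    have hdeg : p.natDegree + q.natDegree = 1 := by
      rw [← Polynomial.natDegree_mul hp0 hq0, ← hpq, hd]
    rcases Nat.eq_zero_or_pos q.natDegree with h | h
    · exact Or.inr (claim p q hpq h)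
    · exact Or.inl (claim q p (by rw [hpq, mul_comm]) (by omega))

lemma auxPrime {σ : Type*} {K : Type*} [Field K] [DecidableEq σ]
    (i0 j0 : σ) (hij : j0 ≠ i0)
    (c : MvPolynomial {b : σ // b ≠ i0} K)
    (hdvd : ¬ (X (⟨j0, hij⟩ : {b : σ // b ≠ i0}) ∣ c)) :
    Prime (X i0 * X j0 + rename (Subtype.val) c) := by
  let e : Option {b : σ // b ≠ i0} ≃ σ := Equiv.optionSubtypeNe i0
  let E : MvPolynomial σ K ≃ₐ[K] Polynomial (MvPolynomial {b : σ // b ≠ i0} K) :=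
    (renameEquiv K e).symm.trans (optionEquivLeft K {b : σ // b ≠ i0})
  have hEnone : E (X i0) = Polynomial.X := by
    show optionEquivLeft K _ ((renameEquiv K e).symm (X i0)) = _
    rw [renameEquiv_symm, renameEquiv_apply, rename_X,
      Equiv.optionSubtypeNe_symm_self i0, optionEquivLeft_X_none]
  have hEsome : ∀ (s : σ) (h : s ≠ i0),
      E (X s) = Polynomial.C (X (⟨s, h⟩ : {b : σ // b ≠ i0})) := by
    intro s h
    show optionEquivLeft K _ ((renameEquiv K e).symm (X s)) = _
    rw [renameEquiv_symm, renameEquiv_apply, rename_X,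
      Equiv.optionSubtypeNe_symm_of_ne h, optionEquivLeft_X_some]
  have hEren : ∀ d : MvPolynomial {b : σ // b ≠ i0} K,
      E (rename Subtype.val d) = Polynomial.C d := by
    intro d
    induction d using MvPolynomial.induction_on with
    | C k =>
      rw [rename_C]
      show optionEquivLeft K _ ((renameEquiv K e).symm (C k)) = _
      rw [renameEquiv_symm, renameEquiv_apply, rename_C, optionEquivLeft_C]
    | add p q hp hq => rw [map_add, map_add, hp, hq, map_add]
    | mul_X p s hp =>
      rw [map_mul, map_mul, hp, rename_X, hEsome s.1 s.2, ← map_mul]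
  rw [← MulEquiv.prime_iff E]
  show Prime (E (X i0 * X j0 + rename Subtype.val c))
  rw [map_add, map_mul, hEnone, hEsome j0 hij, hEren, mul_comm Polynomial.X]
  exact (linIrred (mvPrimeX _) hdvd).prime

/-- Over an algebraically closed field, if `g` vanishes at every point of
`K^{m+1} × K^{n+1}` where `f = ∑_{i=0}^{r} x_i y_i` vanishes (with
`1 ≤ r ≤ min m n`), then `f` divides `g`. -/
theorem stmt2 (K : Type*) [Field K] [IsAlgClosed K] (m n r : ℕ)
    (hm : 0 < m) (hn : 0 < n) (hr1 : 1 ≤ r) (hr : r ≤ min m n)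
    (f g : MvPolynomial (Fin (m + 1) ⊕ Fin (n + 1)) K)
    (hf : f = ∑ i : Fin (r + 1),
      X (Sum.inl (Fin.castLE (by omega) i)) * X (Sum.inr (Fin.castLE (by omega) i)))
    (hg : ∀ (x : Fin (m + 1) → K) (y : Fin (n + 1) → K),
      eval (Sum.elim x y) f = 0 → eval (Sum.elim x y) g = 0) :
    f ∣ g := by
  classical
  haveI : NeZero r := ⟨by omega⟩
  set i0 : Fin (m + 1) ⊕ Fin (n + 1) := Sum.inl 0 with hi0
  have hij : (Sum.inr 0 : Fin (m + 1) ⊕ Fin (n + 1)) ≠ i0 := by simp [hi0]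
  have hxne : ∀ i : Fin r,
      (Sum.inl (Fin.castLE (show r + 1 ≤ m + 1 by omega) i.succ) : Fin (m+1) ⊕ Fin (n+1)) ≠ i0 := by
    intro i
    simp only [hi0, ne_eq, Sum.inl.injEq]
    intro h
    have : ((Fin.castLE (show r + 1 ≤ m + 1 by omega) i.succ : Fin (m+1)) : ℕ) = 0 := by
      rw [h]; rfl
    simp [Fin.val_succ] at this
  have hyne : ∀ i : Fin r,
      (Sum.inr (Fin.castLE (show r + 1 ≤ n + 1 by omega) i.succ) : Fin (m+1) ⊕ Fin (n+1)) ≠ i0 := by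
    intro i
    simp [hi0]
  set c : MvPolynomial {b : Fin (m+1) ⊕ Fin (n+1) // b ≠ i0} K :=
    ∑ i : Fin r, X (⟨Sum.inl (Fin.castLE (show r + 1 ≤ m + 1 by omega) i.succ), hxne i⟩ :
        {b : Fin (m+1) ⊕ Fin (n+1) // b ≠ i0}) *
      X (⟨Sum.inr (Fin.castLE (show r + 1 ≤ n + 1 by omega) i.succ), hyne i⟩ :
        {b : Fin (m+1) ⊕ Fin (n+1) // b ≠ i0}) with hc
  -- rewrite f
  have hfeq : f = X i0 * X (Sum.inr 0) + rename Subtype.val c := by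
    rw [hf, Fin.sum_univ_succ, hc, map_sum]
    have h0x : (Fin.castLE (show r + 1 ≤ m + 1 by omega) (0 : Fin (r+1))) = (0 : Fin (m+1)) := by
      ext; simp
    have h0y : (Fin.castLE (show r + 1 ≤ n + 1 by omega) (0 : Fin (r+1))) = (0 : Fin (n+1)) := by
      ext; simp
    rw [h0x, h0y, ← hi0]
    congr 1
    refine Finset.sum_congr rfl (fun i _ => ?_)
    rw [map_mul, rename_X, rename_X]
  -- the variable does not divide c
  have hdvd : ¬ (X (⟨Sum.inr 0, hij⟩ : {b : Fin (m+1) ⊕ Fin (n+1) // b ≠ i0}) ∣ c) := by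
    rintro ⟨t, ht⟩
    set p : {b : Fin (m+1) ⊕ Fin (n+1) // b ≠ i0} → K := fun b =>
      Sum.elim (fun _ => (1 : K)) (fun j : Fin (n+1) => if (j : ℕ) = 1 then 1 else 0) b.1 with hp
    have hpe : ∀ (b : Fin (m+1) ⊕ Fin (n+1)) (h : b ≠ i0),
        eval p (X (⟨b, h⟩ : {b : Fin (m+1) ⊕ Fin (n+1) // b ≠ i0})) =
        Sum.elim (fun _ => (1 : K)) (fun j : Fin (n+1) => if (j : ℕ) = 1 then 1 else 0) b := by
      intro b h
      rw [eval_X, hp]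
    have hpa : eval p (X (⟨Sum.inr 0, hij⟩ : {b : Fin (m+1) ⊕ Fin (n+1) // b ≠ i0})) = 0 := by
      rw [hpe, Sum.elim_inr]
      norm_num
    have hpc : eval p c = 1 := by
      rw [hc, map_sum]
      rw [Finset.sum_eq_single (0 : Fin r)]
      · rw [map_mul, hpe, hpe, Sum.elim_inl, Sum.elim_inr]
        have h1 : ((Fin.castLE (show r + 1 ≤ n + 1 by omega) (Fin.succ 0) : Fin (n+1)) : ℕ) = 1 := by
          simp
          omega
        rw [h1]
        norm_num
      · intro i _ hi
        rw [map_mul, hpe, hpe, Sum.elim_inl, Sum.elim_inr]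
        have h1 : ((Fin.castLE (show r + 1 ≤ n + 1 by omega) i.succ : Fin (n+1)) : ℕ) = i.val + 1 := by
          simp
        rw [h1]
        have h2 : i.val + 1 ≠ 1 := by
          intro h
          have h0 : i.val = 0 := by omega
          exact hi (Fin.ext (by simp [h0]))
        simp [h2]
        exact hi
      · intro h; exact absurd (Finset.mem_univ _) h
    have : (1 : K) = 0 := by
      rw [← hpc, ht, map_mul, hpa, zero_mul]
    exact one_ne_zero this
  -- f is prime
  have hfprime : Prime f := by
    rw [hfeq]
    exact auxPrime i0 (Sum.inr 0) hij c hdvd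
  -- Nullstellensatz
  have hfne : f ≠ 0 := hfprime.ne_zero
  haveI hPrime : (Ideal.span {f}).IsPrime := (Ideal.span_singleton_prime hfne).mpr hfprime
  have hmem : g ∈ vanishingIdeal K (zeroLocus K (Ideal.span {f})) := by
    rw [mem_vanishingIdeal_iff]
    intro p hp
    have hfp : eval p f = 0 := by
      rw [mem_zeroLocus_iff] at hp
      exact hp f (Ideal.subset_span rfl)
    have := hg (p ∘ Sum.inl) (p ∘ Sum.inr)
    rw [Sum.elim_comp_inl_inr] at this
    exact this hfp
  rw [IsPrime.vanishingIdeal_zeroLocus] at hmem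
  exact Ideal.mem_span_singleton.mp hmem
end

section
/- Let m, n, d, e be positive integers. There is a polynomial P with rational coefficients and degree at most m+n−1 in one variable k such that for every positive integer k, P(k) = binom(m+dk, m)·binom(n+ek, n) − binom(m+dk−1, m)·binom(n+ek−1, n), the coefficient of k^{m+n−1} in P equals d^{m−1} e^{n−1} (m e + n d)/(m! n!), and the coefficient of k^{m+n−2} in P equals d^{m} e^{n} (m²(m−1)e² + m n (m+n) d e + n²(n−1)d²)/(2 · m! n! · d² e²). -/
open Polynomial Finset

private def Top3 (p : Polynomial ℚ) (N : ℕ) (a0 a1 a2 : ℚ) : Prop :=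
  p.degree ≤ (N + 2 : ℕ) ∧ p.coeff (N + 2) = a0 ∧ p.coeff (N + 1) = a1 ∧ p.coeff N = a2

private lemma top3_czero' {p : Polynomial ℚ} {N : ℕ} {a0 a1 a2 : ℚ}
    (h : Top3 p N a0 a1 a2) : ∀ j, N + 2 < j → p.coeff j = 0 := fun j hj =>
  Polynomial.coeff_eq_zero_of_degree_lt (lt_of_le_of_lt h.1 (by exact_mod_cast hj))

private lemma top3_mul_linear {p : Polynomial ℚ} {N : ℕ} {a0 a1 a2 : ℚ}
    (h : Top3 p N a0 a1 a2) (u t : ℚ) :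
    Top3 (p * (C u * X + C t)) (N + 1) (u * a0) (u * a1 + t * a0) (u * a2 + t * a1) := by
  have hco : ∀ k, (p * (C u * X + C t)).coeff (k + 1) = u * p.coeff k + t * p.coeff (k + 1) := by
    intro k
    have h2 : p * (C u * X + C t) = C u * (p * X) + C t * p := by ring
    rw [h2]
    simp [coeff_add, coeff_C_mul, coeff_mul_X]
  refine ⟨?_, ?_, ?_, ?_⟩
  · calc (p * (C u * X + C t)).degree ≤ p.degree + (C u * X + C t).degree := degree_mul_le _ _
      _ ≤ ((N + 2 : ℕ) : WithBot ℕ) + 1 := add_le_add h.1 degree_linear_le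
      _ = ((N + 1 + 2 : ℕ) : WithBot ℕ) := by norm_cast
  · rw [show N + 1 + 2 = N + 2 + 1 by ring, hco (N + 2), h.2.1,
      top3_czero' h (N + 3) (by omega)]
    ring
  · rw [hco (N + 1), h.2.1, h.2.2.1]
  · rw [hco N, h.2.2.1, h.2.2.2]

private lemma top3_mul {p q : Polynomial ℚ} {M N : ℕ} {a0 a1 a2 b0 b1 b2 : ℚ}
    (hp : Top3 p M a0 a1 a2) (hq : Top3 q N b0 b1 b2) :
    (p * q).degree ≤ ((M + N + 4 : ℕ) : WithBot ℕ) ∧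
    (p * q).coeff (M + N + 4) = a0 * b0 ∧
    (p * q).coeff (M + N + 3) = a0 * b1 + a1 * b0 ∧
    (p * q).coeff (M + N + 2) = a0 * b2 + a1 * b1 + a2 * b0 := by
  have hp0 := top3_czero' hp
  have hq0 := top3_czero' hq
  have key : ∀ K : ℕ, (p * q).coeff K = ∑ i ∈ range (K + 1), p.coeff i * q.coeff (K - i) := by
    intro K
    rw [coeff_mul, Finset.Nat.sum_antidiagonal_eq_sum_range_succ_mk]
  have ext : ∀ (K : ℕ) (s : Finset ℕ), (∀ x, x ∈ s → x < K + 1) →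
      (∀ x, x < K + 1 → x ∉ s → (M + 2 < x ∨ N + 2 < K - x)) →
      (p * q).coeff K = ∑ i ∈ s, p.coeff i * q.coeff (K - i) := by
    intro K s hsub hz
    rw [key K]
    refine (Finset.sum_subset (fun x hx => Finset.mem_range.mpr (hsub x hx)) ?_).symm
    intro x hx hx'
    rcases hz x (Finset.mem_range.mp hx) hx' with h | h
    · rw [hp0 x h, zero_mul]
    · rw [hq0 _ h, mul_zero]
  refine ⟨?_, ?_, ?_, ?_⟩
  · calc (p * q).degree ≤ p.degree + q.degree := degree_mul_le _ _
      _ ≤ ((M + 2 : ℕ) : WithBot ℕ) + ((N + 2 : ℕ) : WithBot ℕ) := add_le_add hp.1 hq.1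
      _ = ((M + N + 4 : ℕ) : WithBot ℕ) := by push_cast; ring
  · rw [ext (M + N + 4) {M + 2} (by intro x hx; simp at hx; omega)
      (by intro x hx hx'; simp at hx'; omega)]
    rw [Finset.sum_singleton, show M + N + 4 - (M + 2) = N + 2 by omega,
      hp.2.1, hq.2.1]
  · rw [ext (M + N + 3) {M + 1, M + 2} (by intro x hx; simp at hx; omega)
      (by intro x hx hx'; simp at hx'; omega)]
    rw [Finset.sum_insert (by simp), Finset.sum_singleton,
      show M + N + 3 - (M + 1) = N + 2 by omega, show M + N + 3 - (M + 2) = N + 1 by omega,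
      hp.2.1, hp.2.2.1, hq.2.1, hq.2.2.1]
    ring
  · rw [ext (M + N + 2) {M, M + 1, M + 2} (by intro x hx; simp at hx; omega)
      (by intro x hx hx'; simp at hx'; omega)]
    rw [Finset.sum_insert (by simp), Finset.sum_insert (by simp), Finset.sum_singleton,
      show M + N + 2 - M = N + 2 by omega, show M + N + 2 - (M + 1) = N + 1 by omega,
      show M + N + 2 - (M + 2) = N by omega,
      hp.2.1, hp.2.2.1, hp.2.2.2, hq.2.1, hq.2.2.1, hq.2.2.2]
    ring

private def a2f (d c : ℚ) : ℕ → ℚ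
  | 0 => 0
  | M + 1 => d * a2f d c M + (c + M + 2) * (d ^ M * ((M + 1) * c + (M + 1) * (M + 2) / 2))

private noncomputable def AA (m : ℕ) (d c : ℚ) : Polynomial ℚ :=
  ∏ i ∈ range m, (C d * X + C (c + i + 1))

private lemma top3_XAA (d c : ℚ) : ∀ M : ℕ, Top3 (X * AA (M + 1) d c) M (d ^ (M + 1))
    (d ^ M * ((M + 1) * c + (M + 1) * (M + 2) / 2)) (a2f d c M)
  | 0 => by
    have h : X * AA 1 d c = C d * X ^ 2 + C (c + 1) * X := by
      simp [AA]; ring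
    refine ⟨?_, ?_, ?_, ?_⟩
    · rw [h]; compute_degree!
    · rw [h]; norm_num [coeff_add, coeff_C_mul, coeff_X_pow, coeff_X, coeff_one]
    · rw [h]; norm_num [coeff_add, coeff_C_mul, coeff_X_pow, coeff_X, coeff_one]
    · rw [h]; norm_num [a2f, coeff_add, coeff_C_mul, coeff_X_pow, coeff_X, coeff_one]
  | M + 1 => by
    have ih := top3_XAA d c M
    have key : X * AA (M + 2) d c = (X * AA (M + 1) d c) * (C d * X + C (c + (M + 1 : ℕ) + 1)) := by
      rw [AA, Finset.prod_range_succ, ← AA]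
      ring
    rw [key]
    have T := top3_mul_linear ih d (c + (M + 1 : ℕ) + 1)
    refine ⟨T.1, ?_, ?_, ?_⟩
    · rw [T.2.1]; ring
    · rw [T.2.2.1]; push_cast; ring
    · rw [T.2.2.2, a2f]; push_cast; ring

private lemma a2f_diff (d : ℚ) : ∀ M : ℕ,
    d * (a2f d 0 M - a2f d (-1) M) = d ^ M * ((M : ℚ) * (M + 1) ^ 2) / 2
  | 0 => by simp [a2f]
  | M + 1 => by
    have ih := a2f_diff d M
    simp only [a2f]
    push_cast
    linear_combination d * ih

private lemma prod_eq_choose (m x : ℕ) :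
    ∏ i ∈ range m, ((x : ℚ) + i + 1) = ((m + x).choose m : ℚ) * m.factorial := by
  induction m with
  | zero => simp
  | succ m ih =>
    rw [Finset.prod_range_succ, ih]
    have h := Nat.add_one_mul_choose_eq (m + x) m
    have hc : ((m + x + 1 : ℕ) : ℚ) * ((m + x).choose m : ℚ)
        = ((m + x + 1).choose (m + 1) : ℚ) * (m + 1) := by exact_mod_cast congrArg (Nat.cast : ℕ → ℚ) h
    have he : m + 1 + x = m + x + 1 := by omega
    rw [he, Nat.factorial_succ]
    push_cast at hc ⊢
    linear_combination (m.factorial : ℚ) * hc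

private lemma eval_AA (m : ℕ) (d c x : ℚ) :
    (AA m d c).eval x = ∏ i ∈ range m, (d * x + c + i + 1) := by
  rw [AA, eval_prod]
  refine Finset.prod_congr rfl fun i _ => by simp; ring

/-- There is a rational polynomial `P` of degree at most `m+n-1` with
`P(k) = C(m+dk, m)·C(n+ek, n) − C(m+dk−1, m)·C(n+ek−1, n)` for all positive
integers `k`, whose coefficient of `k^{m+n-1}` is
`d^{m-1} e^{n-1} (me + nd)/(m! n!)` and whose coefficient of `k^{m+n-2}` is
`d^m e^n (m²(m-1)e² + mn(m+n)de + n²(n-1)d²)/(2 m! n! d² e²)`. -/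
theorem stmt4 (m n d e : ℕ) (hm : 0 < m) (hn : 0 < n) (hd : 0 < d) (he : 0 < e) :
    ∃ P : Polynomial ℚ,
      P.degree ≤ (m + n - 1 : ℕ) ∧
      (∀ k : ℕ, 0 < k →
        P.eval (k : ℚ) =
          ((m + d * k).choose m * (n + e * k).choose n : ℚ) -
            ((m + d * k - 1).choose m * (n + e * k - 1).choose n : ℚ)) ∧
      P.coeff (m + n - 1) =
        (d : ℚ) ^ (m - 1) * (e : ℚ) ^ (n - 1) * (m * e + n * d) /
          ((Nat.factorial m : ℚ) * (Nat.factorial n : ℚ)) ∧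
      P.coeff (m + n - 2) =
        (d : ℚ) ^ m * (e : ℚ) ^ n *
            ((m : ℚ) ^ 2 * (m - 1) * e ^ 2 + m * n * (m + n) * d * e +
              (n : ℚ) ^ 2 * (n - 1) * d ^ 2) /
          (2 * (Nat.factorial m : ℚ) * (Nat.factorial n : ℚ) * d ^ 2 * e ^ 2) := by
  obtain ⟨M, rfl⟩ : ∃ M, m = M + 1 := ⟨m - 1, by omega⟩
  obtain ⟨N, rfl⟩ : ∃ N, n = N + 1 := ⟨n - 1, by omega⟩
  have hd' : (d : ℚ) ≠ 0 := by positivity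
  have he' : (e : ℚ) ≠ 0 := by positivity
  set F : ℚ := ((M + 1).factorial : ℚ) * ((N + 1).factorial : ℚ) with hFdef
  have hFne : F ≠ 0 := by
    rw [hFdef]
    positivity
  set S : Polynomial ℚ :=
    AA (M + 1) (d : ℚ) 0 * AA (N + 1) (e : ℚ) 0 -
      AA (M + 1) (d : ℚ) (-1) * AA (N + 1) (e : ℚ) (-1) with hSdef
  have TA0 := top3_XAA (d : ℚ) 0 M
  have TA1 := top3_XAA (d : ℚ) (-1) M
  have TB0 := top3_XAA (e : ℚ) 0 N
  have TB1 := top3_XAA (e : ℚ) (-1) N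
  have H0 := top3_mul TA0 TB0
  have H1 := top3_mul TA1 TB1
  have hX : ∀ (p q : Polynomial ℚ) (j : ℕ), (p * q).coeff j = ((X * p) * (X * q)).coeff (j + 2) := by
    intro p q j
    have h2 : (X * p) * (X * q) = (p * q) * X ^ 2 := by ring
    rw [h2, coeff_mul_X_pow]
  have hSc : ∀ j, S.coeff j =
      ((X * AA (M + 1) (d : ℚ) 0) * (X * AA (N + 1) (e : ℚ) 0)).coeff (j + 2) -
      ((X * AA (M + 1) (d : ℚ) (-1)) * (X * AA (N + 1) (e : ℚ) (-1))).coeff (j + 2) := by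
    intro j
    rw [hSdef, coeff_sub, hX (AA (M + 1) (d : ℚ) 0) (AA (N + 1) (e : ℚ) 0) j,
      hX (AA (M + 1) (d : ℚ) (-1)) (AA (N + 1) (e : ℚ) (-1)) j]
  refine ⟨C F⁻¹ * S, ?_, ?_, ?_, ?_⟩
  · -- degree
    rw [show M + 1 + (N + 1) - 1 = M + N + 1 by omega]
    have hS : S.degree ≤ ((M + N + 1 : ℕ) : WithBot ℕ) := by
      rw [Polynomial.degree_le_iff_coeff_zero]
      intro j hj
      have hj' : M + N + 1 < j := by exact_mod_cast hj
      rw [hSc j]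
      rcases eq_or_lt_of_le (show M + N + 2 ≤ j by omega) with h | h
      · rw [show j + 2 = M + N + 4 by omega, H0.2.1, H1.2.1]
        ring
      · have h2 : M + N + 4 < j + 2 := by omega
        rw [coeff_eq_zero_of_degree_lt (lt_of_le_of_lt H0.1 (by exact_mod_cast h2)),
          coeff_eq_zero_of_degree_lt (lt_of_le_of_lt H1.1 (by exact_mod_cast h2)), sub_zero]
    calc (C F⁻¹ * S).degree ≤ (C F⁻¹).degree + S.degree := degree_mul_le _ _
      _ ≤ 0 + ((M + N + 1 : ℕ) : WithBot ℕ) := add_le_add degree_C_le hS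
      _ = ((M + N + 1 : ℕ) : WithBot ℕ) := by rw [zero_add]
  · -- evaluation
    intro k hk
    have hkd : 1 ≤ d * k := Nat.one_le_iff_ne_zero.mpr (Nat.mul_ne_zero (by omega) (by omega))
    have hke : 1 ≤ e * k := Nat.one_le_iff_ne_zero.mpr (Nat.mul_ne_zero (by omega) (by omega))
    have EA0 : (AA (M + 1) (d : ℚ) 0).eval (k : ℚ) =
        (((M + 1) + d * k).choose (M + 1) : ℚ) * (M + 1).factorial := by
      rw [eval_AA, ← prod_eq_choose (M + 1) (d * k)]
      exact Finset.prod_congr rfl fun i _ => by push_cast; ring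
    have EA1 : (AA (M + 1) (d : ℚ) (-1)).eval (k : ℚ) =
        (((M + 1) + d * k - 1).choose (M + 1) : ℚ) * (M + 1).factorial := by
      rw [eval_AA, show M + 1 + d * k - 1 = M + 1 + (d * k - 1) by omega,
        ← prod_eq_choose (M + 1) (d * k - 1)]
      exact Finset.prod_congr rfl fun i _ => by
        rw [Nat.cast_sub hkd]; push_cast; ring
    have EB0 : (AA (N + 1) (e : ℚ) 0).eval (k : ℚ) =
        (((N + 1) + e * k).choose (N + 1) : ℚ) * (N + 1).factorial := by
      rw [eval_AA, ← prod_eq_choose (N + 1) (e * k)]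
      exact Finset.prod_congr rfl fun i _ => by push_cast; ring
    have EB1 : (AA (N + 1) (e : ℚ) (-1)).eval (k : ℚ) =
        (((N + 1) + e * k - 1).choose (N + 1) : ℚ) * (N + 1).factorial := by
      rw [eval_AA, show N + 1 + e * k - 1 = N + 1 + (e * k - 1) by omega,
        ← prod_eq_choose (N + 1) (e * k - 1)]
      exact Finset.prod_congr rfl fun i _ => by
        rw [Nat.cast_sub hke]; push_cast; ring
    rw [eval_mul, eval_C, hSdef, eval_sub, eval_mul, eval_mul, EA0, EA1, EB0, EB1]
    field_simp [hFdef]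
    ring
  · -- coeff m+n-1
    rw [show M + 1 + (N + 1) - 1 = M + N + 1 by omega, coeff_C_mul, hSc (M + N + 1),
      show M + N + 1 + 2 = M + N + 3 by omega, H0.2.2.1, H1.2.2.1,
      show M + 1 - 1 = M by omega, show N + 1 - 1 = N by omega]
    push_cast
    field_simp
    ring
  · -- coeff m+n-2
    rw [show M + 1 + (N + 1) - 2 = M + N by omega, coeff_C_mul, hSc (M + N),
      H0.2.2.2, H1.2.2.2]
    have hA : a2f (d : ℚ) 0 M = a2f (d : ℚ) (-1) M + (d : ℚ) ^ M * ((M : ℚ) * (M + 1) ^ 2) / (2 * d) := by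
      field_simp
      linear_combination 2 * a2f_diff (d : ℚ) M
    have hB : a2f (e : ℚ) 0 N = a2f (e : ℚ) (-1) N + (e : ℚ) ^ N * ((N : ℚ) * (N + 1) ^ 2) / (2 * e) := by
      field_simp
      linear_combination 2 * a2f_diff (e : ℚ) N
    rw [hA, hB]
    push_cast
    field_simp
    ring
end
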